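/- For every natural number d and every complex number t with |t| < 1, the series ∑_{m=0}^{∞} L_d(m)·t^m converges with sum (1+t)^d/(1-t)^{d+1}. -/

import Mathlib

/-- `binom(y, d) = (∏_{k=0}^{d-1} (y - k)) / d!` for complex `y`. -/
noncomputable def cbinom (y : ℂ) (d : ℕ) : ℂ :=
  (∏ k ∈ Finset.range d, (y - k)) / (Nat.factorial d : ℂ)

/-- The Ehrhart polynomial of the `d`-dimensional cross-polytope. -/
noncomputable def Lpoly (d : ℕ) (x : ℂ) : ℂ :=
  ∑ j ∈ Finset.range (d + 1), (Nat.choose d j : ℂ) * cbinom ((d : ℂ) - (j : ℂ) + x) d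

lemma cbinom_natCast (n d : ℕ) : cbinom (n : ℂ) d = (n.choose d : ℂ) := by
  unfold cbinom
  rcases lt_or_ge n d with h | h
  · rw [Finset.prod_eq_zero (Finset.mem_range.2 h) (by simp), Nat.choose_eq_zero_of_lt h]
    simp
  · have hp : ∏ k ∈ Finset.range d, ((n : ℂ) - k) = (n.descFactorial d : ℂ) := by
      rw [Nat.descFactorial_eq_prod_range, Nat.cast_prod]
      refine Finset.prod_congr rfl fun k hk => ?_
      rw [Nat.cast_sub (le_of_lt (lt_of_lt_of_le (Finset.mem_range.1 hk) h))]
    rw [hp, Nat.descFactorial_eq_factorial_mul_choose, Nat.cast_mul]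
    rw [mul_div_cancel_left₀ _ (show (d.factorial:ℂ) ≠ 0 by exact_mod_cast d.factorial_ne_zero)]

lemma hasSum_shifted (d j : ℕ) (hj : j ≤ d) (t : ℂ) (ht : ‖t‖ < 1) :
    HasSum (fun m : ℕ => cbinom ((d : ℂ) - (j : ℂ) + m) d * t ^ m)
      (t ^ j / (1 - t) ^ (d + 1)) := by
  have ht' : ‖t‖ < 1 := ht
  have key : ∀ m : ℕ, cbinom ((d : ℂ) - (j : ℂ) + m) d * t ^ m
      = ((m + (d - j)).choose d : ℂ) * t ^ m := by
    intro m
    have h2 : (d : ℂ) - (j : ℂ) + m = ((m + (d - j) : ℕ) : ℂ) := by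
      push_cast [Nat.cast_sub hj]; ring
    rw [h2, cbinom_natCast]
  have base := (hasSum_choose_mul_geometric_of_norm_lt_one (𝕜 := ℂ) d ht').mul_left (t ^ j)
  have hzero : ∑ i ∈ Finset.range j, cbinom ((d : ℂ) - (j : ℂ) + i) d * t ^ i = 0 := by
    refine Finset.sum_eq_zero fun i hi => ?_
    rw [key i, Nat.choose_eq_zero_of_lt (by simp at hi; omega : i + (d - j) < d)]
    simp
  refine (hasSum_nat_add_iff' j).mp ?_
  rw [hzero, sub_zero]
  convert base using 1
  · rfl
  · funext n
    rw [key (n + j), show (n + j) + (d - j) = n + d by omega]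
    ring
  · rw [mul_one_div]

/-- `∑_{m≥0} L_d(m) t^m = (1+t)^d / (1-t)^{d+1}` for `|t| < 1`. -/
theorem hasSum_ehrhart_generating (d : ℕ) (t : ℂ) (ht : ‖t‖ < 1) :
    HasSum (fun m : ℕ => Lpoly d (m : ℂ) * t ^ m) ((1 + t) ^ d / (1 - t) ^ (d + 1)) := by
  have h : ∀ j ∈ Finset.range (d + 1),
      HasSum (fun m : ℕ => (d.choose j : ℂ) * (cbinom ((d : ℂ) - (j : ℂ) + m) d * t ^ m))
        ((d.choose j : ℂ) * (t ^ j / (1 - t) ^ (d + 1))) := fun j hj =>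
    (hasSum_shifted d j (Nat.lt_succ_iff.mp (Finset.mem_range.1 hj)) t ht).mul_left _
  have H := hasSum_sum h
  have heq : (fun m : ℕ => ∑ j ∈ Finset.range (d + 1),
      (d.choose j : ℂ) * (cbinom ((d : ℂ) - (j : ℂ) + m) d * t ^ m))
      = fun m : ℕ => Lpoly d (m : ℂ) * t ^ m := by
    funext m
    rw [Lpoly, Finset.sum_mul]
    exact Finset.sum_congr rfl fun j _ => by ring
  have hsum : (∑ j ∈ Finset.range (d + 1), (d.choose j : ℂ) * (t ^ j / (1 - t) ^ (d + 1)))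
      = (1 + t) ^ d / (1 - t) ^ (d + 1) := by
    rw [show (fun j => (d.choose j : ℂ) * (t ^ j / (1 - t) ^ (d + 1))) = fun j => ((d.choose j : ℂ) * t ^ j) / (1 - t) ^ (d + 1) from funext fun j => by ring, ← Finset.sum_div]
    congr 1
    rw [show (1 + t) = (t + 1) from add_comm 1 t, add_pow]
    exact Finset.sum_congr rfl fun j _ => by ring
  rw [heq, hsum] at H
  exact H
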